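/- arXiv:0803.3321 — 2 statements merged into one kernel-verified Lean document; each statement's English description precedes it below -/
import Mathlib

section
/- Let r > 0, c = (1/r)(1 + 1/r), and let ω be the ℝ³-valued 1-form on the sphere of radius r defined by ω_x(v) = −c (x × v) for v tangent to the sphere at x. Then for tangent vectors u, v at x, (dω + (1/2)[ω,ω])(u,v) = (1 − 1/r²)(u × v), where [ω,ω](u,v) = 2 ω(u) × ω(v). -/
open Matrix

private lemma fderiv_cross_aux (c : ℝ) (w x u : Fin 3 → ℝ) :
    fderiv ℝ (fun y => -(c • (y ⨯₃ w))) x u = -(c • (u ⨯₃ w)) := by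
  have h : (fun y : Fin 3 → ℝ => -(c • (y ⨯₃ w))) =
      ((-c) • (crossProduct).flip w).toContinuousLinearMap := by
    funext y
    simp [LinearMap.smul_apply]
  rw [h, ContinuousLinearMap.fderiv]
  simp

/-- For a sphere of radius `r`, `c = (1/r)(1 + 1/r)`, and the `ℝ³`-valued
1-form `ω_x(v) = −c (x × v)` (extended to all of `ℝ³` by the same formula),
the local curvature form `dω + (1/2)[ω,ω]`, with
`[ω,ω](u,v) = 2 ω(u) × ω(v)` and `dω(u,v)` computed on constant vector
fields via Fréchet derivatives, equals `(1 − 1/r²)(u × v)` on tangent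
vectors `u, v` at a point `x` of the sphere. -/
theorem curvature_rolling_sphere_on_sphere (r : ℝ) (hr : 0 < r)
    (c : ℝ) (hc : c = (1 / r) * (1 + 1 / r))
    (ω : (Fin 3 → ℝ) → (Fin 3 → ℝ) → (Fin 3 → ℝ))
    (hω : ∀ x v, ω x v = -(c • (x ⨯₃ v)))
    (x u v : Fin 3 → ℝ) (hx : x ⬝ᵥ x = r ^ 2) (hu : x ⬝ᵥ u = 0) (hv : x ⬝ᵥ v = 0) :
    (fderiv ℝ (fun y => ω y v) x u - fderiv ℝ (fun y => ω y u) x v)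
        + (1 / 2 : ℝ) • ((2 : ℝ) • (ω x u ⨯₃ ω x v))
      = (1 - 1 / r ^ 2) • (u ⨯₃ v) := by
  simp only [hω]
  rw [fderiv_cross_aux, fderiv_cross_aux]
  have hr' : r ≠ 0 := ne_of_gt hr
  simp only [dotProduct, Fin.sum_univ_three] at hx hu hv
  have e : r ^ 2 * c ^ 2 - 2 * c = 1 - 1 / r ^ 2 := by rw [hc]; field_simp; ring
  have key0 : r ^ 2 * (u 1 * v 2 - u 2 * v 1)
      = (x 0 * (u 1 * v 2 - u 2 * v 1) + x 1 * (u 2 * v 0 - u 0 * v 2)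
          + x 2 * (u 0 * v 1 - u 1 * v 0)) * x 0 := by
    linear_combination (-(u 1 * v 2 - u 2 * v 1)) * hx + (x 1 * v 2 - x 2 * v 1) * hu
      - (x 1 * u 2 - x 2 * u 1) * hv
  have key1 : r ^ 2 * (u 2 * v 0 - u 0 * v 2)
      = (x 0 * (u 1 * v 2 - u 2 * v 1) + x 1 * (u 2 * v 0 - u 0 * v 2)
          + x 2 * (u 0 * v 1 - u 1 * v 0)) * x 1 := by
    linear_combination (-(u 2 * v 0 - u 0 * v 2)) * hx + (x 2 * v 0 - x 0 * v 2) * hu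
      - (x 2 * u 0 - x 0 * u 2) * hv
  have key2 : r ^ 2 * (u 0 * v 1 - u 1 * v 0)
      = (x 0 * (u 1 * v 2 - u 2 * v 1) + x 1 * (u 2 * v 0 - u 0 * v 2)
          + x 2 * (u 0 * v 1 - u 1 * v 0)) * x 2 := by
    linear_combination (-(u 0 * v 1 - u 1 * v 0)) * hx + (x 0 * v 1 - x 1 * v 0) * hu
      - (x 0 * u 1 - x 1 * u 0) * hv
  funext i
  fin_cases i
  · simp [crossProduct]
    linear_combination (-(c ^ 2)) * key0 + (u 1 * v 2 - u 2 * v 1) * e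
  · simp [crossProduct]
    linear_combination (-(c ^ 2)) * key1 + (u 2 * v 0 - u 0 * v 2) * e
  · simp [crossProduct]
    linear_combination (-(c ^ 2)) * key2 + (u 0 * v 1 - u 1 * v 0) * e
end

section
/- For the unit quaternion q(x,y,z) = z − y i + x j associated to a point (x,y,z) on the unit sphere S², one has ‖q(x,y,z)‖ = 1, and conjugation v ↦ q v q⁻¹ on purely imaginary quaternions is the rotation through angle 2·arccos(z) about the axis (−y, x, 0) (when (x,y) ≠ (0,0)). In particular, antipodal points (x,y,z) and (−x,−y,−z) give quaternions q and −q that define the same rotation. -/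
open Matrix

/-- The unit quaternion `q(x,y,z) = z − y i + x j` associated to a point of
the unit sphere. -/
def sphereQuat (x y z : ℝ) : Quaternion ℝ := ⟨z, -y, x, 0⟩

/-- The purely imaginary quaternion associated to a vector `v ∈ ℝ³`. -/
def imQuat (v : Fin 3 → ℝ) : Quaternion ℝ := ⟨0, v 0, v 1, v 2⟩

/-- For `(x,y,z)` on the unit sphere `S²`, the quaternion
`q = q(x,y,z) = z − y i + x j` is a unit quaternion; conjugation
`v ↦ q v q⁻¹` on purely imaginary quaternions is (by the Rodrigues rotation
formula) the rotation through angle `2·arccos z` about the axis `(−y, x, 0)`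
(when `(x,y) ≠ (0,0)`); and antipodal points give quaternions `q` and `−q`
which define the same rotation. -/
theorem sphereQuat_holonomy (x y z : ℝ) (hsphere : x ^ 2 + y ^ 2 + z ^ 2 = 1) :
    ‖sphereQuat x y z‖ = 1 ∧
    (¬(x = 0 ∧ y = 0) →
      ∀ v : Fin 3 → ℝ,
        let q : Quaternion ℝ := sphereQuat x y z
        let a : Fin 3 → ℝ := (Real.sqrt (x ^ 2 + y ^ 2))⁻¹ • ![-y, x, 0]
        let θ : ℝ := 2 * Real.arccos z
        let w : Fin 3 → ℝ :=
          Real.cos θ • v + Real.sin θ • (a ⨯₃ v) + ((1 - Real.cos θ) * (a ⬝ᵥ v)) • a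
        q * imQuat v * q⁻¹ = imQuat w) ∧
    sphereQuat (-x) (-y) (-z) = -sphereQuat x y z ∧
    (∀ p : Quaternion ℝ,
      (-sphereQuat x y z) * p * (-sphereQuat x y z)⁻¹ =
        sphereQuat x y z * p * (sphereQuat x y z)⁻¹) := by
  have hz1 : -1 ≤ z := by nlinarith
  have hz2 : z ≤ 1 := by nlinarith
  have hnormSq : Quaternion.normSq (sphereQuat x y z) = 1 := by
    rw [Quaternion.normSq_def']
    simp only [sphereQuat]
    nlinarith
  have hinv : (sphereQuat x y z)⁻¹ = star (sphereQuat x y z) := by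
    rw [Quaternion.inv_def, hnormSq]
    simp
  refine ⟨?_, ?_, ?_, ?_⟩
  · have h1 : ‖sphereQuat x y z‖ * ‖sphereQuat x y z‖ = 1 := by
      rw [← Quaternion.normSq_eq_norm_mul_self, hnormSq]
    nlinarith [norm_nonneg (sphereQuat x y z)]
  · intro hxy v
    intro q a θ w
    have hxy2 : 0 < x ^ 2 + y ^ 2 := by
      rcases not_and_or.mp hxy with h | h <;> positivity
    set s : ℝ := Real.sqrt (x ^ 2 + y ^ 2) with hs
    have hs2 : s ^ 2 = x ^ 2 + y ^ 2 := Real.sq_sqrt (le_of_lt hxy2)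
    have hs0 : s ≠ 0 := by positivity
    have hcos : Real.cos θ = 2 * z ^ 2 - 1 := by
      show Real.cos (2 * Real.arccos z) = _
      rw [Real.cos_two_mul, Real.cos_arccos hz1 hz2]
    have hsin : Real.sin θ = 2 * z * s := by
      show Real.sin (2 * Real.arccos z) = _
      rw [Real.sin_two_mul, Real.sin_arccos, Real.cos_arccos hz1 hz2]
      have h1 : 1 - z ^ 2 = x ^ 2 + y ^ 2 := by linarith
      rw [h1, ← hs]
      ring
    have hwexp : ∀ i, w i = (2 * z ^ 2 - 1) * v i
        + (2 * z) * ((![-y, x, 0]) ⨯₃ v) i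
        + 2 * ((![-y, x, 0]) ⬝ᵥ v) * (![-y, x, 0]) i := by
      intro i
      have hw : w i = Real.cos θ * v i + Real.sin θ * (a ⨯₃ v) i
          + ((1 - Real.cos θ) * (a ⬝ᵥ v)) * a i := rfl
      have hax : a = s⁻¹ • ![-y, x, 0] := rfl
      have hcoef : 1 - Real.cos θ = 2 * s ^ 2 := by
        rw [hcos, hs2]; linarith
      rw [hw, hcoef, hcos, hsin, hax, LinearMap.map_smul, LinearMap.smul_apply,
        smul_dotProduct]
      simp only [Pi.smul_apply, smul_eq_mul]
      field_simp
    show sphereQuat x y z * imQuat v * (sphereQuat x y z)⁻¹ = imQuat w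
    rw [hinv]
    have himq : ∀ u : Fin 3 → ℝ, imQuat u = ⟨0, u 0, u 1, u 2⟩ := fun _ => rfl
    ext
    · simp only [Quaternion.re_mul, Quaternion.re_star,
        Quaternion.imI_star, Quaternion.imJ_star, Quaternion.imK_star,
        Quaternion.imI_mul, Quaternion.imJ_mul, Quaternion.imK_mul]
      simp only [himq, sphereQuat]
      ring
    · simp only [Quaternion.re_mul, Quaternion.re_star,
        Quaternion.imI_star, Quaternion.imJ_star, Quaternion.imK_star,
        Quaternion.imI_mul, Quaternion.imJ_mul, Quaternion.imK_mul]
      simp only [himq, sphereQuat]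
      rw [hwexp 0]
      simp only [cross_apply, dotProduct, Fin.sum_univ_three,
        Matrix.cons_val_zero, Matrix.cons_val_one, Matrix.head_cons,
        Matrix.cons_val_two, Matrix.tail_cons]
      linear_combination (-(v 0)) * hsphere
    · simp only [Quaternion.re_mul, Quaternion.re_star,
        Quaternion.imI_star, Quaternion.imJ_star, Quaternion.imK_star,
        Quaternion.imI_mul, Quaternion.imJ_mul, Quaternion.imK_mul]
      simp only [himq, sphereQuat]
      rw [hwexp 1]
      simp only [cross_apply, dotProduct, Fin.sum_univ_three,
        Matrix.cons_val_zero, Matrix.cons_val_one, Matrix.head_cons,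
        Matrix.cons_val_two, Matrix.tail_cons]
      linear_combination (-(v 1)) * hsphere
    · simp only [Quaternion.re_mul, Quaternion.re_star,
        Quaternion.imI_star, Quaternion.imJ_star, Quaternion.imK_star,
        Quaternion.imI_mul, Quaternion.imJ_mul, Quaternion.imK_mul]
      simp only [himq, sphereQuat]
      rw [hwexp 2]
      simp only [cross_apply, dotProduct, Fin.sum_univ_three,
        Matrix.cons_val_zero, Matrix.cons_val_one, Matrix.head_cons,
        Matrix.cons_val_two, Matrix.tail_cons]
      linear_combination (-(v 2)) * hsphere
  · ext <;> simp only [Quaternion.re_neg, Quaternion.imI_neg, Quaternion.imJ_neg,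
      Quaternion.imK_neg] <;> simp [sphereQuat]
  · intro p
    rw [inv_neg, neg_mul, neg_mul, mul_neg, neg_neg]
end
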